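/- Let x, r_c, r_b be real numbers with r_c < x < 0 and r_b < r_c − x. Set r_ab = r_c − x, r_a = r_b − r_ab, k₁ = r_ab + Φ⁻(r_a) − Φ⁻(r_b), and k₂ = x + Φ⁻(r_b) + Φ⁻(k₁) − Φ⁻(r_c). Then k₁ < 0, k₂ < 0, and the co-transformation identity Φ⁻(x) = Φ⁻(r_c) + Φ⁻(k₂) holds. -/

import Mathlib

/-- Φ⁻(x) = log₂(1 − 2^x) -/
noncomputable def Phim (x : ℝ) : ℝ := Real.logb 2 (1 - (2:ℝ) ^ x)

theorem stmt_18 (x rc rb : ℝ) (hrc : rc < x) (hx : x < 0) (hrb : rb < rc - x) :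
    rc - x + Phim (rb - (rc - x)) - Phim rb < 0 ∧
    x + Phim rb + Phim (rc - x + Phim (rb - (rc - x)) - Phim rb) - Phim rc < 0 ∧
    Phim x = Phim rc +
      Phim (x + Phim rb + Phim (rc - x + Phim (rb - (rc - x)) - Phim rb) - Phim rc) := by
  have h2 : (1:ℝ) < 2 := one_lt_two
  have hpos : ∀ y : ℝ, (0:ℝ) < (2:ℝ) ^ y := fun y => Real.rpow_pos_of_pos two_pos y
  have hlt1 : ∀ y : ℝ, y < 0 → (2:ℝ) ^ y < 1 := fun y hy =>
    Real.rpow_lt_one_of_one_lt_of_neg h2 hy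
  have hP : ∀ y : ℝ, y < 0 → (2:ℝ) ^ Phim y = 1 - (2:ℝ) ^ y := fun y hy => by
    unfold Phim
    exact Real.rpow_logb two_pos (by norm_num) (by linarith [hlt1 y hy])
  have hneg : ∀ t : ℝ, (2:ℝ) ^ t < 1 → t < 0 := fun t ht => by
    by_contra h
    push_neg at h
    have := Real.one_le_rpow h2.le h
    linarith
  -- notation
  have hra : rb - (rc - x) < 0 := by linarith
  have hrb0 : rb < 0 := by linarith
  have hrcx : rc - x < 0 := by linarith
  have hrc0 : rc < 0 := by linarith
  have hbpos := hpos rb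
  have hb1 := hlt1 rb hrb0
  have hden : (0:ℝ) < 1 - (2:ℝ) ^ rb := by linarith
  have hdenc : (0:ℝ) < 1 - (2:ℝ) ^ rc := by linarith [hlt1 rc hrc0]
  have hmul : (2:ℝ) ^ (rc - x) * (2:ℝ) ^ (rb - (rc - x)) = (2:ℝ) ^ rb := by
    rw [← Real.rpow_add two_pos]; ring_nf
  have hmul2 : (2:ℝ) ^ x * (2:ℝ) ^ (rc - x) = (2:ℝ) ^ rc := by
    rw [← Real.rpow_add two_pos]; ring_nf
  set k1 := rc - x + Phim (rb - (rc - x)) - Phim rb with hk1def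
  have hnum1 : (2:ℝ) ^ (rc - x) * (1 - (2:ℝ) ^ (rb - (rc - x))) = (2:ℝ) ^ (rc - x) - (2:ℝ) ^ rb := by
    rw [mul_sub, mul_one, hmul]
  have hk1pow : (2:ℝ) ^ k1 = ((2:ℝ) ^ (rc - x) - (2:ℝ) ^ rb) / (1 - (2:ℝ) ^ rb) := by
    rw [hk1def, Real.rpow_sub two_pos, Real.rpow_add two_pos, hP _ hra, hP _ hrb0, hnum1]
  have hltab : (2:ℝ) ^ rb < (2:ℝ) ^ (rc - x) :=
    Real.rpow_lt_rpow_left_iff h2 |>.mpr hrb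
  have hk1pos : (0:ℝ) < (2:ℝ) ^ k1 := hpos k1
  have hk1lt : (2:ℝ) ^ k1 < 1 := by
    rw [hk1pow, div_lt_one hden]
    linarith [hlt1 (rc - x) hrcx]
  have hk1neg : k1 < 0 := hneg k1 hk1lt
  set k2 := x + Phim rb + Phim k1 - Phim rc with hk2def
  have hPk1 : (2:ℝ) ^ Phim k1 = (1 - (2:ℝ) ^ (rc - x)) / (1 - (2:ℝ) ^ rb) := by
    rw [hP _ hk1neg, hk1pow]
    field_simp
    ring
  have hk2pow : (2:ℝ) ^ k2 = ((2:ℝ) ^ x - (2:ℝ) ^ rc) / (1 - (2:ℝ) ^ rc) := by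
    rw [hk2def, Real.rpow_sub two_pos, Real.rpow_add two_pos, Real.rpow_add two_pos,
      hP _ hrb0, hP _ hrc0, hPk1]
    field_simp
    linear_combination (-1:ℝ) * hmul2
  have hltcx : (2:ℝ) ^ rc < (2:ℝ) ^ x := Real.rpow_lt_rpow_left_iff h2 |>.mpr hrc
  have hk2lt : (2:ℝ) ^ k2 < 1 := by
    rw [hk2pow, div_lt_one hdenc]
    linarith [hlt1 x hx]
  have hk2neg : k2 < 0 := hneg k2 hk2lt
  refine ⟨hk1neg, hk2neg, ?_⟩
  have hPk2 : (2:ℝ) ^ Phim k2 = (1 - (2:ℝ) ^ x) / (1 - (2:ℝ) ^ rc) := by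
    rw [hP _ hk2neg, hk2pow]
    field_simp
    ring
  have hsum : (2:ℝ) ^ (Phim rc + Phim k2) = 1 - (2:ℝ) ^ x := by
    rw [Real.rpow_add two_pos, hP _ hrc0, hPk2]
    field_simp
  have hx1 : (2:ℝ) ^ Phim x = 1 - (2:ℝ) ^ x := hP _ hx
  have heq : (2:ℝ) ^ Phim x = (2:ℝ) ^ (Phim rc + Phim k2) := by rw [hx1, hsum]
  have h1 := Real.logb_rpow (b := 2) (x := Phim x) (by norm_num) (by norm_num)
  have h2' := Real.logb_rpow (b := 2) (x := Phim rc + Phim k2) (by norm_num) (by norm_num)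
  rw [← h1, ← h2', heq]
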